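/- Let α ≥ 1 be a real number and let S be a set of positive integers of polynomial density α. Then the series ∑_{p ∈ P(S)} p^{-1/α} diverges; that is, the partial sums N ↦ ∑_{p ∈ P(S), p ≤ N} p^{-1/α} tend to infinity as N → ∞. -/
import Mathlib

/-- The set of prime factors of elements of `S`. -/
def PrimeFactors (S : Set ℕ) : Set ℕ :=
  {p | p.Prime ∧ ∃ s ∈ S, p ∣ s}

/-- `S` is a set of positive integers of polynomial density `α`:
`0 ∉ S` and there is `K > 0` with `card {s ∈ S : s ≤ n} ≥ K * n^(1/α)` for all `n ≥ 1`. -/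
def HasPolyDensity (S : Set ℕ) (α : ℝ) : Prop :=
  0 ∉ S ∧ ∃ K : ℝ, 0 < K ∧ ∀ n : ℕ, 0 < n →
    K * (n : ℝ) ^ (1 / α) ≤ ({s ∈ S | s ≤ n}).ncard

open Filter Set Finset Real

/-- The completely multiplicative function `m ↦ m ^ (-β)`. -/
noncomputable def rpowHom (β : ℝ) : ℕ →* ℝ where
  toFun m := (m : ℝ) ^ (-β)
  map_one' := by simp
  map_mul' m n := by
    push_cast
    rw [Real.mul_rpow (by positivity) (by positivity)]

lemma rpowHom_apply (β : ℝ) (m : ℕ) : rpowHom β m = (m : ℝ) ^ (-β) := rfl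

theorem sum_primeFactors_rpow_diverges (α : ℝ) (hα : 1 ≤ α) (S : Set ℕ)
    (hS : HasPolyDensity S α) :
    Filter.Tendsto
      (fun N : ℕ => ∑ p ∈ Finset.range (N + 1),
        Set.indicator (PrimeFactors S) (fun p : ℕ => (p : ℝ) ^ (-(1 / α))) p)
      Filter.atTop Filter.atTop := by
  classical
  obtain ⟨h0S, K, hK, hcard⟩ := hS
  have hα0 : (0:ℝ) < α := lt_of_lt_of_le one_pos hα
  set β : ℝ := 1 / α with hβdef
  have hβ0 : 0 < β := by positivity
  set f : ℕ → ℝ := fun m => (m : ℝ) ^ (-β) with hfdef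
  have hf0 : ∀ m, 0 ≤ f m := fun m => by positivity
  set P : Set ℕ := PrimeFactors S with hPdef
  set g : ℕ → ℝ := Set.indicator P f with hgdef
  have hg0 : ∀ i, 0 ≤ g i := fun i => Set.indicator_nonneg (fun j _ => hf0 j) i
  by_contra hcon
  -- Step 1: `g` is summable
  have hsum : Summable g := by
    rw [summable_iff_not_tendsto_nat_atTop_of_nonneg hg0]
    intro h
    exact hcon (h.comp (tendsto_add_atTop_nat 1))
  set T : ℝ := ∑' i, g i with hTdef
  -- basic bounds on `f p` for primes `p`
  set c : ℝ := (2 : ℝ) ^ (-β) with hcdef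
  have hc1 : c < 1 := Real.rpow_lt_one_of_one_lt_of_neg one_lt_two (neg_neg_iff_pos.mpr hβ0)
  have hc0 : 0 ≤ c := by positivity
  have h1c : (0:ℝ) < 1 - c := by linarith
  have hfp_le : ∀ p : ℕ, p.Prime → f p ≤ c := by
    intro p hp
    exact Real.rpow_le_rpow_of_nonpos two_pos (by exact_mod_cast hp.two_le)
      (neg_nonpos.mpr hβ0.le)
  have hfp_lt1 : ∀ {p : ℕ}, p.Prime → ‖rpowHom β p‖ < 1 := by
    intro p hp
    rw [rpowHom_apply, Real.norm_eq_abs, abs_of_nonneg (hf0 p)]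
    exact lt_of_le_of_lt (hfp_le p hp) hc1
  -- per-prime factor bound
  have hfactor : ∀ p : ℕ, p.Prime → (1 - f p)⁻¹ ≤ Real.exp ((1 - c)⁻¹ * f p) := by
    intro p hp
    have hx0 : 0 ≤ f p := hf0 p
    have hxc : f p ≤ c := hfp_le p hp
    have hpos : (0:ℝ) < 1 - f p := by linarith
    have ht0 : (0:ℝ) ≤ (1 - c)⁻¹ := by positivity
    have e : (1 - c)⁻¹ * (1 - c) = 1 := inv_mul_cancel₀ h1c.ne'
    have key : (1 - f p)⁻¹ ≤ 1 + (1 - c)⁻¹ * f p := by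
      rw [inv_le_iff_one_le_mul₀ hpos]
      nlinarith [mul_nonneg (mul_nonneg ht0 hx0) (sub_nonneg.mpr hxc)]
    calc (1 - f p)⁻¹ ≤ 1 + (1 - c)⁻¹ * f p := key
      _ = (1 - c)⁻¹ * f p + 1 := by ring
      _ ≤ Real.exp ((1 - c)⁻¹ * f p) := Real.add_one_le_exp _
  -- the set of `P`-factored numbers
  set Q : Set ℕ := {m | m ≠ 0 ∧ ∀ p, p.Prime → p ∣ m → p ∈ P} with hQdef
  have hSQ : S ⊆ Q := by
    intro s hs
    refine ⟨fun h => h0S (h ▸ hs), fun p hp hdvd => ⟨hp, s, hs, hdvd⟩⟩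
  set B : ℝ := Real.exp ((1 - c)⁻¹ * T) with hBdef
  -- Step 2: `Q.indicator f` is summable
  have hQsum : Summable (Q.indicator f) := by
    refine summable_of_sum_le (c := B)
      (fun i => Set.indicator_nonneg (fun j _ => hf0 j) i) ?_
    intro u
    set F : Finset ℕ := (u.filter (· ∈ Q)).biUnion Nat.primeFactors with hFdef
    have hFP : ∀ p ∈ F, p.Prime ∧ p ∈ P := by
      intro p hp
      rw [hFdef, Finset.mem_biUnion] at hp
      obtain ⟨m, hm, hpm⟩ := hp
      rw [Finset.mem_filter] at hm
      rw [Nat.mem_primeFactors] at hpm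
      exact ⟨hpm.1, hm.2.2 p hpm.1 hpm.2.1⟩
    have hES := EulerProduct.summable_and_hasSum_factoredNumbers_prod_filter_prime_geometric
      (f := rpowHom β) hfp_lt1 F
    have hHS : HasSum ((Nat.factoredNumbers F).indicator f)
        (∏ p ∈ F with p.Prime, (1 - f p)⁻¹) := by
      have := hES.2
      rw [← hasSum_subtype_iff_indicator]
      exact this
    have hsub : ∀ x ∈ u, Q.indicator f x ≤ (Nat.factoredNumbers F).indicator f x := by
      intro x hx
      by_cases hxQ : x ∈ Q
      · have hxF : x ∈ Nat.factoredNumbers F := by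
          rw [Nat.mem_factoredNumbers]
          refine ⟨hxQ.1, fun p hp => ?_⟩
          rw [hFdef, Finset.mem_biUnion]
          exact ⟨x, Finset.mem_filter.mpr ⟨hx, hxQ⟩,
            Nat.mem_primeFactors.mpr ⟨Nat.prime_of_mem_primeFactorsList hp,
              Nat.dvd_of_mem_primeFactorsList hp, hxQ.1⟩⟩
        rw [Set.indicator_of_mem hxQ, Set.indicator_of_mem hxF]
      · rw [Set.indicator_of_notMem hxQ]
        exact Set.indicator_nonneg (fun j _ => hf0 j) x
    calc ∑ x ∈ u, Q.indicator f x
        ≤ ∑ x ∈ u, (Nat.factoredNumbers F).indicator f x := Finset.sum_le_sum hsub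
      _ ≤ ∏ p ∈ F with p.Prime, (1 - f p)⁻¹ :=
          sum_le_hasSum u (fun i _ => Set.indicator_nonneg (fun j _ => hf0 j) i) hHS
      _ ≤ ∏ p ∈ F with p.Prime, Real.exp ((1 - c)⁻¹ * f p) := by
          refine Finset.prod_le_prod (fun p hp => ?_) (fun p hp => ?_)
          · have hxc := hfp_le p (hFP p (Finset.mem_filter.mp hp).1).1
            have hpos : (0:ℝ) < 1 - f p := by linarith
            positivity
          · exact hfactor p (Finset.mem_filter.mp hp).2
      _ = Real.exp (∑ p ∈ F with p.Prime, (1 - c)⁻¹ * f p) := (Real.exp_sum _ _).symm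
      _ ≤ B := by
          rw [hBdef]
          apply Real.exp_le_exp.mpr
          rw [← Finset.mul_sum]
          refine mul_le_mul_of_nonneg_left ?_ (by positivity)
          have heq : ∀ p ∈ F.filter (fun p => p.Prime), f p = g p := by
            intro p hp
            rw [hgdef, Set.indicator_of_mem (hFP p (Finset.mem_filter.mp hp).1).2]
          rw [Finset.sum_congr rfl heq]
          exact Summable.sum_le_tsum _ (fun i _ => hg0 i) hsum
  -- Step 3: choose a cutoff `M` so tails are `< K/2`
  set L : ℝ := ∑' i, Q.indicator f i with hLdef
  have hL : HasSum (Q.indicator f) L := hQsum.hasSum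
  have htend := hL.tendsto_sum_nat
  have hKpos : (0:ℝ) < K / 2 := by positivity
  obtain ⟨M, hM⟩ := (htend.eventually (eventually_gt_nhds (show L - K/2 < L by linarith))).exists
  -- tail sums over finsets of numbers `> M` are `< K/2`
  have htail : ∀ t : Finset ℕ, (∀ x ∈ t, M < x) → ∑ x ∈ t, Q.indicator f x < K / 2 := by
    intro t ht
    have hdisj : Disjoint t (Finset.range M) := by
      rw [Finset.disjoint_left]
      intro a ha hr
      exact absurd (Finset.mem_range.mp hr) (not_lt.mpr (ht a ha).le)
    have hle : ∑ x ∈ t ∪ Finset.range M, Q.indicator f x ≤ L :=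
      sum_le_hasSum _ (fun i _ => Set.indicator_nonneg (fun j _ => hf0 j) i) hL
    rw [Finset.sum_union hdisj] at hle
    linarith
  -- Step 4: choose `n` large and derive the contradiction
  have hrpow : Tendsto (fun n : ℕ => (n : ℝ) ^ β) atTop atTop :=
    (tendsto_rpow_atTop hβ0).comp tendsto_natCast_atTop_atTop
  obtain ⟨n, hn⟩ := ((hrpow.eventually_ge_atTop (2 * (M + 2) / K)).and
    (eventually_ge_atTop 1)).exists
  obtain ⟨hnβ, hn1⟩ := hn
  have hn0 : 0 < n := hn1
  have hnpow_pos : (0:ℝ) < (n:ℝ) ^ β := by positivity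
  -- the set `A = {s ∈ S | s ≤ n}` is finite
  have hAfin : ({s ∈ S | s ≤ n} : Set ℕ).Finite :=
    (Set.finite_Iic n).subset (fun x hx => hx.2)
  have hcard_n := hcard n hn0
  set A : Finset ℕ := hAfin.toFinset with hAdef
  have hAcard : ({s ∈ S | s ≤ n} : Set ℕ).ncard = A.card := by
    rw [hAdef, Set.ncard_eq_toFinset_card _ hAfin]
  -- split A into small and large elements
  set t : Finset ℕ := A.filter (fun x => M < x) with htdef
  have hsplit : A.card ≤ (M + 1) + t.card := by
    have hsub : A ⊆ Finset.range (M + 1) ∪ t := by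
      intro x hx
      rcases le_or_gt x M with h | h
      · exact Finset.mem_union_left _ (Finset.mem_range.mpr (by omega))
      · exact Finset.mem_union_right _ (Finset.mem_filter.mpr ⟨hx, h⟩)
    calc A.card ≤ (Finset.range (M + 1) ∪ t).card := Finset.card_le_card hsub
      _ ≤ (Finset.range (M + 1)).card + t.card := Finset.card_union_le _ _
      _ = (M + 1) + t.card := by rw [Finset.card_range]
  -- bound `t.card` using the tail estimate
  have htmem : ∀ x ∈ t, x ∈ S ∧ x ≤ n ∧ M < x := by
    intro x hx
    rw [htdef, Finset.mem_filter] at hx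
    have := hx.1
    rw [hAdef, Set.Finite.mem_toFinset] at this
    exact ⟨this.1, this.2, hx.2⟩
  have htsum : (t.card : ℝ) * (n : ℝ) ^ (-β) ≤ ∑ x ∈ t, Q.indicator f x := by
    have h := Finset.card_nsmul_le_sum t (Q.indicator f) ((n : ℝ) ^ (-β)) ?_
    · simpa [nsmul_eq_mul] using h
    · intro x hx
      obtain ⟨hxS, hxn, _⟩ := htmem x hx
      have hx0 : 0 < x := Nat.pos_of_ne_zero (fun h => h0S (h ▸ hxS))
      rw [Set.indicator_of_mem (hSQ hxS)]
      exact Real.rpow_le_rpow_of_nonpos (by exact_mod_cast hx0)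
        (by exact_mod_cast hxn) (neg_nonpos.mpr hβ0.le)
  have h1 : ∑ x ∈ t, Q.indicator f x < K / 2 := htail t (fun x hx => (htmem x hx).2.2)
  have h2 : (t.card : ℝ) < K / 2 * (n : ℝ) ^ β := by
    have hlt := lt_of_le_of_lt htsum h1
    rw [Real.rpow_neg (Nat.cast_nonneg n)] at hlt
    calc (t.card : ℝ) = (t.card : ℝ) * ((n : ℝ) ^ β)⁻¹ * (n : ℝ) ^ β := by
          field_simp
      _ < K / 2 * (n : ℝ) ^ β := mul_lt_mul_of_pos_right hlt hnpow_pos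
  have hKn : 2 * ((M : ℝ) + 2) ≤ K * (n : ℝ) ^ β := by
    have := (div_le_iff₀ hK).mp hnβ
    linarith
  have hA_real : (A.card : ℝ) ≤ (M : ℝ) + 1 + (t.card : ℝ) := by
    exact_mod_cast hsplit
  rw [hAcard] at hcard_n
  linarith
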